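/- (Pliss lemma) If nonnegative real numbers $a_0, a_1, \dots, a_n$ satisfy $a_0 + \dots + a_n \le (n+1)C$ for some $C > 0$, then there exists $k \le n$ such that for every $j$ with $0 \le j \le k$, one has $a_{k-j} + a_{k-j+1} + \dots + a_k \le (j+1)C$. -/

import Mathlib

open Finset

/-- Pliss lemma: from an average bound on the whole sum, extract an index `k`
where all backward partial sums ending at `k` satisfy the average bound. -/
theorem pliss_lemma (n : ℕ) (C : ℝ) (hC : 0 < C) (a : ℕ → ℝ)
    (ha : ∀ i ≤ n, 0 ≤ a i)
    (hsum : ∑ i ∈ Finset.range (n + 1), a i ≤ ((n : ℝ) + 1) * C) :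
    ∃ k ≤ n, ∀ j ≤ k, ∑ i ∈ Finset.Icc (k - j) k, a i ≤ ((j : ℝ) + 1) * C := by
  set f : ℕ → ℝ := fun m => ∑ i ∈ Finset.range m, a i - m * C with hf
  obtain ⟨m, hm, hmin⟩ := Finset.exists_min_image (Finset.Icc 1 (n + 1)) f
    ⟨1, by simp⟩
  simp only [Finset.mem_Icc] at hm
  have key : ∀ t ≤ m, f m ≤ f t := by
    intro t ht
    rcases Nat.eq_zero_or_pos t with h0 | h1
    · subst h0
      have h2 : f m ≤ f (n + 1) := by
        rcases eq_or_lt_of_le hm.2 with h | h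
        · rw [h]
        · exact hmin (n + 1) (Finset.mem_Icc.mpr ⟨by omega, le_rfl⟩)
     
      have h3 : f (n + 1) ≤ 0 := by
        simp only [hf]
        push_cast
        linarith
      have h4 : f 0 = 0 := by simp [hf]
      linarith
    · exact hmin t (Finset.mem_Icc.mpr ⟨h1, ht.trans hm.2⟩)
  refine ⟨m - 1, by omega, ?_⟩
  intro j hj
  have hm1 : m - 1 + 1 = m := by omega
  have hIcc : Finset.Icc (m - 1 - j) (m - 1) = Finset.Ico (m - 1 - j) m := by
    rw [← Finset.Ico_add_one_right_eq_Icc, hm1]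
  rw [hIcc, Finset.sum_Ico_eq_sub a (by omega)]
  have hk := key (m - 1 - j) (by omega)
  simp only [hf] at hk
  have hc : ((m - 1 - j : ℕ) : ℝ) = (m : ℝ) - 1 - j := by
    have : m - 1 - j + (j + 1) = m := by omega
    have := congrArg (fun x : ℕ => (x : ℝ)) this
    push_cast at this
    linarith
  rw [hc] at hk
  nlinarith
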